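/- Let ξ₁, ξ₂ : [0,1] × [0,1] → ℝ be continuous functions. Suppose that for every pair of Borel probability measures p₁, p₂ on [0,1] that are absolutely continuous with respect to Lebesgue measure, and every such pair q₁, q₂, we have ∫∫ξ₁ d(p₁⊗p₂) ≥ ∫∫ξ₁ d(q₁⊗q₂) if and only if ∫∫ξ₂ d(p₁⊗p₂) ≤ ∫∫ξ₂ d(q₁⊗q₂). Then there exist α > 0 and β ∈ ℝ such that ξ₂(x,y) = -α·ξ₁(x,y) + β for all (x,y) ∈ [0,1]². -/

import Mathlib

open MeasureTheory Set
open scoped ENNReal BoundedContinuousFunction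

namespace Stmt5Aux

noncomputable section

abbrev II : Set ℝ := Set.Icc (0:ℝ) 1
abbrev SQ : Set (ℝ × ℝ) := II ×ˢ II

variable {p q r p₁ q₁ p₂ q₂ : Measure ℝ}





lemma smul_prod_meas (c : ℝ≥0∞) (μ ν : Measure ℝ) [SFinite μ] [SFinite ν] :
    (c • μ).prod ν = c • (μ.prod ν) := by
  ext s hs
  simp [Measure.prod_apply hs, lintegral_smul_measure]

lemma prod_smul_meas (c : ℝ≥0∞) (μ ν : Measure ℝ) [SFinite μ] [SFinite ν] :
    μ.prod (c • ν) = c • (μ.prod ν) := by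
  ext s hs
  simp only [Measure.prod_apply hs, Measure.smul_apply, smul_eq_mul]
  exact lintegral_const_mul'' c (measurable_measure_prodMk_left hs).aemeasurable

lemma isFinite_smul (c : ℝ) (μ : Measure ℝ) [IsFiniteMeasure μ] :
    IsFiniteMeasure (ENNReal.ofReal c • μ) := by
  constructor
  simp only [Measure.smul_apply, smul_eq_mul]
  exact ENNReal.mul_lt_top ENNReal.ofReal_lt_top (measure_lt_top μ univ)

/-- mixture of two measures -/
def mix (t : ℝ) (p q : Measure ℝ) : Measure ℝ :=
  ENNReal.ofReal (1 - t) • p + ENNReal.ofReal t • q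

instance mix_sfinite (t : ℝ) (p q : Measure ℝ) [IsProbabilityMeasure p]
    [IsProbabilityMeasure q] : SFinite (mix t p q) := by
  haveI := isFinite_smul (1 - t) p
  haveI := isFinite_smul t q
  unfold mix
  infer_instance

lemma mix_zero (p q : Measure ℝ) : mix 0 p q = p := by
  simp [mix]

lemma mix_one (p q : Measure ℝ) : mix 1 p q = q := by
  simp [mix]

lemma mix_prob {t : ℝ} (ht : t ∈ Icc (0:ℝ) 1) (p q : Measure ℝ)
    [IsProbabilityMeasure p] [IsProbabilityMeasure q] :
    IsProbabilityMeasure (mix t p q) := by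
  constructor
  simp only [mix, Measure.add_apply, Measure.smul_apply, smul_eq_mul, measure_univ, mul_one]
  rw [← ENNReal.ofReal_add (by linarith [ht.2]) ht.1]
  norm_num

lemma mix_ac {t : ℝ} {p q ρ : Measure ℝ} (hp : p ≪ ρ) (hq : q ≪ ρ) :
    mix t p q ≪ ρ := by
  intro s hs
  simp [mix, Measure.add_apply, Measure.smul_apply, hp hs, hq hs]



variable {p q r p₁ q₁ p₂ q₂ : Measure ℝ}


/-- expected payoff -/
def J (f : ℝ × ℝ →ᵇ ℝ) (p q : Measure ℝ) : ℝ := ∫ z, f z ∂(p.prod q)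

lemma J_mix_left (f : ℝ × ℝ →ᵇ ℝ) [IsProbabilityMeasure p] [IsProbabilityMeasure q]
    [IsProbabilityMeasure r] {t : ℝ} (ht : t ∈ Icc (0:ℝ) 1) :
    J f (mix t p q) r = (1 - t) * J f p r + t * J f q r := by
  haveI := isFinite_smul (1 - t) p
  haveI := isFinite_smul t q
  unfold J mix
  rw [Measure.add_prod, smul_prod_meas, smul_prod_meas,
    integral_add_measure ((f.integrable _).smul_measure ENNReal.ofReal_ne_top)
      ((f.integrable _).smul_measure ENNReal.ofReal_ne_top),
    integral_smul_measure, integral_smul_measure,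
    ENNReal.toReal_ofReal (by linarith [ht.2]), ENNReal.toReal_ofReal ht.1]
  simp [smul_eq_mul]

lemma J_mix_right (f : ℝ × ℝ →ᵇ ℝ) [IsProbabilityMeasure p] [IsProbabilityMeasure q]
    [IsProbabilityMeasure r] {t : ℝ} (ht : t ∈ Icc (0:ℝ) 1) :
    J f r (mix t p q) = (1 - t) * J f r p + t * J f r q := by
  haveI := isFinite_smul (1 - t) p
  haveI := isFinite_smul t q
  unfold J mix
  rw [Measure.prod_add, prod_smul_meas, prod_smul_meas,
    integral_add_measure ((f.integrable _).smul_measure ENNReal.ofReal_ne_top)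
      ((f.integrable _).smul_measure ENNReal.ofReal_ne_top),
    integral_smul_measure, integral_smul_measure,
    ENNReal.toReal_ofReal (by linarith [ht.2]), ENNReal.toReal_ofReal ht.1]
  simp [smul_eq_mul]

lemma J_mix_mix (f : ℝ × ℝ →ᵇ ℝ) [IsProbabilityMeasure p₁] [IsProbabilityMeasure q₁]
    [IsProbabilityMeasure p₂] [IsProbabilityMeasure q₂] {t s : ℝ}
    (ht : t ∈ Icc (0:ℝ) 1) (hs : s ∈ Icc (0:ℝ) 1) :
    J f (mix t p₁ q₁) (mix s p₂ q₂) =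
      J f p₁ p₂ + (J f q₁ p₂ - J f p₁ p₂) * t + (J f p₁ q₂ - J f p₁ p₂) * s +
        (J f q₁ q₂ - J f q₁ p₂ - J f p₁ q₂ + J f p₁ p₂) * (t * s) := by
  haveI := mix_prob hs p₂ q₂
  rw [J_mix_left f ht, J_mix_right f hs, J_mix_right f hs]
  ring

/-- measures a.c. w.r.t. restricted volume give no mass outside the square -/
lemma prod_compl_null (hp : p ≪ volume.restrict II) (hq : q ≪ volume.restrict II)
    [SFinite p] [SFinite q] : (p.prod q) SQᶜ = 0 := by
  have hpI : p IIᶜ = 0 := by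
    apply hp
    rw [Measure.restrict_apply' measurableSet_Icc]
    simp
  have hqI : q IIᶜ = 0 := by
    apply hq
    rw [Measure.restrict_apply' measurableSet_Icc]
    simp
  have hsub : SQᶜ ⊆ (IIᶜ ×ˢ (univ : Set ℝ)) ∪ ((univ : Set ℝ) ×ˢ IIᶜ) := by
    intro z hz
    simp only [mem_compl_iff, mem_prod, not_and_or] at hz
    rcases hz with h | h
    · exact Or.inl (by simp [h])
    · exact Or.inr (by simp [h])
  refine measure_mono_null hsub (measure_union_null ?_ ?_) <;>
    rw [Measure.prod_prod] <;> simp [hpI, hqI]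

lemma integral_eq_J (ξ : ℝ × ℝ → ℝ) (f : ℝ × ℝ →ᵇ ℝ) (hf : ∀ z ∈ SQ, f z = ξ z)
    (hp : p ≪ volume.restrict II) (hq : q ≪ volume.restrict II)
    [SFinite p] [SFinite q] :
    (∫ z, ξ z ∂(p.prod q)) = J f p q := by
  refine (integral_congr_ae ?_).symm
  have h0 : (p.prod q) {z | ¬ f z = ξ z} = 0 := by
    refine measure_mono_null ?_ (prod_compl_null hp hq)
    intro z hz
    simp only [mem_setOf_eq] at hz
    intro hzs
    exact hz (hf z hzs)
  exact (ae_iff).mpr h0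

section Biaffine

variable {A₁ A₂ B₁ B₂ C₁ C₂ D₁ D₂ : ℝ}

/-- From the ranking hypothesis: equal F-values give equal G-values. -/
lemma rank_eq
    (H : ∀ t s t' s' : ℝ, t ∈ Icc (0:ℝ) 1 → s ∈ Icc (0:ℝ) 1 → t' ∈ Icc (0:ℝ) 1 →
      s' ∈ Icc (0:ℝ) 1 →
      (A₁ + B₁*t + C₁*s + D₁*(t*s) ≥ A₁ + B₁*t' + C₁*s' + D₁*(t'*s') ↔
       A₂ + B₂*t + C₂*s + D₂*(t*s) ≤ A₂ + B₂*t' + C₂*s' + D₂*(t'*s')))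
    {t s t' s' : ℝ} (ht : t ∈ Icc (0:ℝ) 1) (hs : s ∈ Icc (0:ℝ) 1)
    (ht' : t' ∈ Icc (0:ℝ) 1) (hs' : s' ∈ Icc (0:ℝ) 1)
    (hF : A₁ + B₁*t + C₁*s + D₁*(t*s) = A₁ + B₁*t' + C₁*s' + D₁*(t'*s')) :
    A₂ + B₂*t + C₂*s + D₂*(t*s) = A₂ + B₂*t' + C₂*s' + D₂*(t'*s') := by
  have h1 := (H t s t' s' ht hs ht' hs').mp (le_of_eq hF.symm)
  have h2 := (H t' s' t s ht' hs' ht hs).mp (le_of_eq hF)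
  linarith

/-- From the ranking hypothesis: strictly larger F-value gives strictly smaller G-value. -/
lemma rank_lt
    (H : ∀ t s t' s' : ℝ, t ∈ Icc (0:ℝ) 1 → s ∈ Icc (0:ℝ) 1 → t' ∈ Icc (0:ℝ) 1 →
      s' ∈ Icc (0:ℝ) 1 →
      (A₁ + B₁*t + C₁*s + D₁*(t*s) ≥ A₁ + B₁*t' + C₁*s' + D₁*(t'*s') ↔
       A₂ + B₂*t + C₂*s + D₂*(t*s) ≤ A₂ + B₂*t' + C₂*s' + D₂*(t'*s')))
    {t s t' s' : ℝ} (ht : t ∈ Icc (0:ℝ) 1) (hs : s ∈ Icc (0:ℝ) 1)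
    (ht' : t' ∈ Icc (0:ℝ) 1) (hs' : s' ∈ Icc (0:ℝ) 1)
    (hF : A₁ + B₁*t + C₁*s + D₁*(t*s) > A₁ + B₁*t' + C₁*s' + D₁*(t'*s')) :
    A₂ + B₂*t + C₂*s + D₂*(t*s) < A₂ + B₂*t' + C₂*s' + D₂*(t'*s') := by
  have h1 := (H t s t' s' ht hs ht' hs').mp (le_of_lt hF)
  have h2 : ¬ (A₁ + B₁*t' + C₁*s' + D₁*(t'*s') ≥ A₁ + B₁*t + C₁*s + D₁*(t*s)) := by linarith
  have h3 := (H t' s' t s ht' hs' ht hs).not.mp h2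
  push_neg at h3
  exact h3

lemma l1core
    (H : ∀ t s t' s' : ℝ, t ∈ Icc (0:ℝ) 1 → s ∈ Icc (0:ℝ) 1 → t' ∈ Icc (0:ℝ) 1 →
      s' ∈ Icc (0:ℝ) 1 →
      (A₁ + B₁*t + C₁*s + D₁*(t*s) ≥ A₁ + B₁*t' + C₁*s' + D₁*(t'*s') ↔
       A₂ + B₂*t + C₂*s + D₂*(t*s) ≤ A₂ + B₂*t' + C₂*s' + D₂*(t'*s')))
    (hB : B₁ ≠ 0) :
    ∃ α : ℝ, 0 < α ∧ B₂ = -α * B₁ ∧ C₂ = -α * C₁ ∧ D₂ = -α * D₁ := by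
  have h01 : (0:ℝ) ∈ Icc (0:ℝ) 1 := by norm_num
  have h11 : (1:ℝ) ∈ Icc (0:ℝ) 1 := by norm_num
  -- sign of B₂
  have hBsign : B₁ * B₂ < 0 := by
    rcases lt_or_gt_of_ne hB with h | h
    · have := rank_lt H h01 h01 h11 h01 (by nlinarith)
      nlinarith
    · have := rank_lt H h11 h01 h01 h01 (by nlinarith)
      nlinarith
  set α : ℝ := -B₂ / B₁ with hα
  have hαpos : 0 < α := by
    rw [hα]
    rcases lt_or_gt_of_ne hB with h | h
    · apply div_pos_of_neg_of_neg _ h; nlinarith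
    · apply div_pos _ h; nlinarith
  have hB₂ : B₂ = -α * B₁ := by rw [hα, neg_mul, div_mul_cancel₀ _ hB, neg_neg]
  -- the matching trick: choose s₁ > 0 small
  set K : ℝ := |C₁| + |D₁| with hK
  have hKnn : 0 ≤ K := by positivity
  set s₁ : ℝ := min 1 (|B₁| / (4 * (K + 1))) with hs₁
  have hs₁pos : 0 < s₁ := by
    apply lt_min one_pos
    positivity
  have hs₁le : s₁ ≤ 1 := min_le_left _ _
  have hs₁mem : s₁ ∈ Icc (0:ℝ) 1 := ⟨le_of_lt hs₁pos, hs₁le⟩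
  -- key bound: for t' ∈ [0,1], |(C₁ + D₁ * t') * s₁ / B₁| ≤ 1/4
  have hbound : ∀ t' : ℝ, t' ∈ Icc (0:ℝ) 1 → |(C₁ + D₁ * t') * s₁ / B₁| ≤ 1/4 := by
    intro t' ht'
    have h1 : |C₁ + D₁ * t'| ≤ K := by
      calc |C₁ + D₁ * t'| ≤ |C₁| + |D₁ * t'| := abs_add_le _ _
        _ ≤ |C₁| + |D₁| := by
            have : |D₁ * t'| ≤ |D₁| := by
              rw [abs_mul]
              have ht'abs : |t'| ≤ 1 := by rw [abs_of_nonneg ht'.1]; exact ht'.2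
              nlinarith [abs_nonneg D₁]
            linarith
        _ = K := rfl
    have hs₁b : s₁ ≤ |B₁| / (4 * (K + 1)) := min_le_right _ _
    have hBpos : 0 < |B₁| := abs_pos.mpr hB
    rw [abs_div, abs_mul]
    rw [div_le_iff₀ hBpos]
    have habss : |s₁| = s₁ := abs_of_pos hs₁pos
    rw [habss]
    have h4 : (0:ℝ) < 4 * (K + 1) := by positivity
    calc |C₁ + D₁ * t'| * s₁ ≤ K * (|B₁| / (4 * (K + 1))) := by
          apply mul_le_mul h1 hs₁b (le_of_lt hs₁pos) hKnn
      _ = K * |B₁| / (4 * (K + 1)) := by ring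
      _ ≤ 1/4 * |B₁| := by
          rw [div_le_iff₀ h4]
          nlinarith [abs_nonneg B₁]
  -- matching equation at parameter t'
  have hmatch : ∀ t' : ℝ, t' ∈ Icc (1/4 : ℝ) (1/2 : ℝ) →
      B₂ * (C₁ + D₁ * t') = (C₂ + D₂ * t') * B₁ := by
    intro t' ht'
    have ht'01 : t' ∈ Icc (0:ℝ) 1 := ⟨by linarith [ht'.1], by linarith [ht'.2]⟩
    set t : ℝ := t' + (C₁ + D₁ * t') * s₁ / B₁ with htdef
    have htb := hbound t' ht'01
    have habs := abs_le.mp htb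
    have ht01 : t ∈ Icc (0:ℝ) 1 := by
      constructor
      · rw [htdef]; linarith [ht'.1, habs.1]
      · rw [htdef]; linarith [ht'.2, habs.2]
    have hFeq : A₁ + B₁*t + C₁*(0:ℝ) + D₁*(t*0) = A₁ + B₁*t' + C₁*s₁ + D₁*(t'*s₁) := by
      rw [htdef]
      field_simp
      ring
    have hGeq := rank_eq H ht01 h01 ht'01 hs₁mem hFeq
    have : B₂ * ((C₁ + D₁ * t') * s₁ / B₁) = (C₂ + D₂ * t') * s₁ := by
      rw [htdef] at hGeq
      nlinarith [hGeq]
    have h2 : B₂ * (C₁ + D₁ * t') * s₁ = (C₂ + D₂ * t') * B₁ * s₁ := by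
      field_simp at this
      nlinarith [this]
    have := mul_right_cancel₀ (ne_of_gt hs₁pos) h2
    linarith [this]
  have e14 := hmatch (1/4) (by norm_num)
  have e12 := hmatch (1/2) (by norm_num)
  have hD₂ : D₂ = -α * D₁ := by
    rw [hα]
    field_simp
    nlinarith [e14, e12]
  have hC₂ : C₂ = -α * C₁ := by
    rw [hα]
    field_simp
    nlinarith [e14, e12]
  exact ⟨α, hαpos, hB₂, hC₂, hD₂⟩


lemma l1
    (H : ∀ t s t' s' : ℝ, t ∈ Icc (0:ℝ) 1 → s ∈ Icc (0:ℝ) 1 → t' ∈ Icc (0:ℝ) 1 →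
      s' ∈ Icc (0:ℝ) 1 →
      (A₁ + B₁*t + C₁*s + D₁*(t*s) ≥ A₁ + B₁*t' + C₁*s' + D₁*(t'*s') ↔
       A₂ + B₂*t + C₂*s + D₂*(t*s) ≤ A₂ + B₂*t' + C₂*s' + D₂*(t'*s'))) :
    ∃ α : ℝ, 0 < α ∧ B₂ = -α * B₁ ∧ C₂ = -α * C₁ ∧ D₂ = -α * D₁ := by
  have h01 : (0:ℝ) ∈ Icc (0:ℝ) 1 := by norm_num
  have h11 : (1:ℝ) ∈ Icc (0:ℝ) 1 := by norm_num
  by_cases hB : B₁ ≠ 0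
  · exact l1core H hB
  push_neg at hB
  have hB₂ : B₂ = 0 := by
    have := rank_eq H h11 h01 h01 h01 (by rw [hB]; ring)
    linarith
  by_cases hC : C₁ ≠ 0
  · -- swap the roles of t and s
    have H' : ∀ t s t' s' : ℝ, t ∈ Icc (0:ℝ) 1 → s ∈ Icc (0:ℝ) 1 → t' ∈ Icc (0:ℝ) 1 →
        s' ∈ Icc (0:ℝ) 1 →
        (A₁ + C₁*t + B₁*s + D₁*(t*s) ≥ A₁ + C₁*t' + B₁*s' + D₁*(t'*s') ↔
         A₂ + C₂*t + B₂*s + D₂*(t*s) ≤ A₂ + C₂*t' + B₂*s' + D₂*(t'*s')) := by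
      intro t s t' s' ht hs ht' hs'
      have h := H s t s' t' hs ht hs' ht'
      constructor
      · intro hge
        have := h.mp (by nlinarith [hge])
        nlinarith [this]
      · intro hle
        have := h.mpr (by nlinarith [hle])
        nlinarith [this]
    obtain ⟨α, hαpos, hC₂, hB₂', hD₂⟩ := l1core H' hC
    exact ⟨α, hαpos, hB₂', hC₂, hD₂⟩
  push_neg at hC
  have hC₂ : C₂ = 0 := by
    have := rank_eq H h01 h11 h01 h01 (by rw [hC]; ring)
    linarith
  by_cases hD : D₁ ≠ 0
  · have hDsign : D₁ * D₂ < 0 := by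
      rcases lt_or_gt_of_ne hD with h | h
      · have := rank_lt H h01 h01 h11 h11 (by rw [hB, hC]; nlinarith)
        nlinarith [this]
      · have := rank_lt H h11 h11 h01 h01 (by rw [hB, hC]; nlinarith)
        nlinarith [this]
    refine ⟨-D₂ / D₁, ?_, ?_, ?_, ?_⟩
    · rcases lt_or_gt_of_ne hD with h | h
      · apply div_pos_of_neg_of_neg _ h; nlinarith
      · apply div_pos _ h; nlinarith
    · rw [hB₂, hB]; ring
    · rw [hC₂, hC]; ring
    · field_simp
  push_neg at hD
  have hD₂ : D₂ = 0 := by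
    have := rank_eq H h11 h11 h01 h01 (by rw [hB, hC, hD]; ring)
    linarith
  exact ⟨1, one_pos, by rw [hB₂, hB]; ring, by rw [hC₂, hC]; ring, by rw [hD₂, hD]; ring⟩

end Biaffine

lemma l2 (S : Set (ℝ × ℝ)) (hne : S.Nonempty)
    (hrel : ∀ u ∈ S, ∀ v ∈ S, (u.1 ≥ v.1 ↔ u.2 ≤ v.2))
    (hseg : ∀ u ∈ S, ∀ v ∈ S, ∀ x ∈ Set.uIcc u.1 v.1,
      ∃ w ∈ S, w.1 = x ∧ (w.2 - u.2) * (v.1 - u.1) = (v.2 - u.2) * (w.1 - u.1)) :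
    ∃ α : ℝ, 0 < α ∧ ∃ β : ℝ, ∀ u ∈ S, u.2 = -α * u.1 + β := by
  have heq : ∀ u ∈ S, ∀ v ∈ S, u.1 = v.1 → u.2 = v.2 := by
    intro u hu v hv h
    have h1 := (hrel u hu v hv).mp (le_of_eq h.symm)
    have h2 := (hrel v hv u hu).mp (le_of_eq h)
    linarith
  have hlt : ∀ u ∈ S, ∀ v ∈ S, u.1 < v.1 → v.2 < u.2 := by
    intro u hu v hv h
    have h2 := (hrel v hv u hu).mp (le_of_lt h)
    rcases lt_or_eq_of_le h2 with h3 | h3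
    · exact h3
    · exfalso
      have := (hrel u hu v hv).mpr (le_of_eq h3.symm)
      linarith
  by_cases hdeg : ∀ u ∈ S, ∀ v ∈ S, u.1 = v.1
  · obtain ⟨u₀, hu₀⟩ := hne
    refine ⟨1, one_pos, u₀.2 + u₀.1, ?_⟩
    intro u hu
    have h1 := hdeg u hu u₀ hu₀
    have h2 := heq u hu u₀ hu₀ h1
    rw [h1, h2]; ring
  push_neg at hdeg
  obtain ⟨a, ha, b, hb, hab⟩ := hdeg
  -- arrange u₀.1 < v₀.1
  obtain ⟨u₀, hu₀, v₀, hv₀, hlt₀⟩ : ∃ u₀ ∈ S, ∃ v₀ ∈ S, u₀.1 < v₀.1 := by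
    rcases lt_or_gt_of_ne hab with h | h
    · exact ⟨a, ha, b, hb, h⟩
    · exact ⟨b, hb, a, ha, h⟩
  have hd : (0:ℝ) < v₀.1 - u₀.1 := by linarith
  set α : ℝ := (u₀.2 - v₀.2) / (v₀.1 - u₀.1) with hα
  have hy : v₀.2 < u₀.2 := hlt u₀ hu₀ v₀ hv₀ hlt₀
  have hαpos : 0 < α := div_pos (by linarith) hd
  refine ⟨α, hαpos, u₀.2 + α * u₀.1, ?_⟩
  intro w hw
  rcases le_or_gt w.1 u₀.1 with hc1 | hc1
  · rcases eq_or_lt_of_le hc1 with hc1' | hc1'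
    · -- w.1 = u₀.1
      have := heq w hw u₀ hu₀ hc1'
      rw [this, hc1']; ring
    · -- w.1 < u₀.1 : use segment from w to v₀ through x = u₀.1
      obtain ⟨w', hw'S, hw'1, hcross⟩ := hseg w hw v₀ hv₀ u₀.1
        (by rw [Set.uIcc_of_le (by linarith : w.1 ≤ v₀.1)]; exact ⟨le_of_lt hc1', le_of_lt hlt₀⟩)
      have hw'2 : w'.2 = u₀.2 := heq w' hw'S u₀ hu₀ hw'1
      rw [hw'1, hw'2] at hcross
      -- (u₀.2 - w.2) * (v₀.1 - w.1) = (v₀.2 - w.2) * (u₀.1 - w.1)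
      rw [hα]
      field_simp
      nlinarith [hcross]
  · rcases le_or_gt w.1 v₀.1 with hc2 | hc2
    · -- u₀.1 < w.1 ≤ v₀.1 : segment from u₀ to v₀ through x = w.1
      obtain ⟨w', hw'S, hw'1, hcross⟩ := hseg u₀ hu₀ v₀ hv₀ w.1
        (by rw [Set.uIcc_of_le (le_of_lt hlt₀)]; exact ⟨le_of_lt hc1, hc2⟩)
      have hw'2 : w'.2 = w.2 := heq w' hw'S w hw hw'1
      rw [hw'1, hw'2] at hcross
      rw [hα]
      field_simp
      nlinarith [hcross]
    · -- v₀.1 < w.1 : segment from u₀ to w through x = v₀.1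
      obtain ⟨w', hw'S, hw'1, hcross⟩ := hseg u₀ hu₀ w hw v₀.1
        (by rw [Set.uIcc_of_le (by linarith : u₀.1 ≤ w.1)]; exact ⟨le_of_lt hlt₀, le_of_lt hc2⟩)
      have hw'2 : w'.2 = v₀.2 := heq w' hw'S v₀ hv₀ hw'1
      rw [hw'1, hw'2] at hcross
      rw [hα]
      field_simp
      nlinarith [hcross]

/-- uniform measure on an interval -/
def unif (a b : ℝ) : Measure ℝ := (ENNReal.ofReal (b - a))⁻¹ • volume.restrict (Icc a b)

lemma unif_prob {a b : ℝ} (h : a < b) : IsProbabilityMeasure (unif a b) := by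
  constructor
  simp only [unif, Measure.smul_apply, smul_eq_mul, Measure.restrict_apply MeasurableSet.univ,
    univ_inter, Real.volume_Icc]
  exact ENNReal.inv_mul_cancel (by simp [ENNReal.ofReal_pos]; linarith) ENNReal.ofReal_ne_top

lemma unif_ac {a b : ℝ} (h0 : 0 ≤ a) (h1 : b ≤ 1) : unif a b ≪ volume.restrict II := by
  intro s hs
  rw [Measure.restrict_apply' measurableSet_Icc] at hs
  simp only [unif, Measure.smul_apply, smul_eq_mul, Measure.restrict_apply' measurableSet_Icc]
  rw [measure_mono_null (inter_subset_inter_right s (Icc_subset_Icc h0 h1)) hs]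
  simp

lemma smul_prod_meas' (c : ℝ≥0∞) (μ ν : Measure ℝ) [SFinite μ] [SFinite ν] :
    (c • μ).prod ν = c • (μ.prod ν) := by
  ext s hs
  simp [Measure.prod_apply hs, lintegral_smul_measure]

lemma prod_smul_meas' (c : ℝ≥0∞) (μ ν : Measure ℝ) [SFinite μ] [SFinite ν] :
    μ.prod (c • ν) = c • (μ.prod ν) := by
  ext s hs
  simp only [Measure.prod_apply hs, Measure.smul_apply, smul_eq_mul]
  exact lintegral_const_mul'' c (measurable_measure_prodMk_left hs).aemeasurable

lemma unif_prod_eq {a b c d : ℝ} (hab : a < b) (hcd : c < d) :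
    (unif a b).prod (unif c d) =
      ((ENNReal.ofReal (b - a))⁻¹ * (ENNReal.ofReal (d - c))⁻¹) •
        (((volume : Measure ℝ).prod volume).restrict (Icc a b ×ˢ Icc c d)) := by
  unfold unif
  haveI : IsFiniteMeasure ((ENNReal.ofReal (d - c))⁻¹ • (volume.restrict (Icc c d))) := by
    constructor
    simp only [Measure.smul_apply, smul_eq_mul, Measure.restrict_apply MeasurableSet.univ,
      univ_inter, Real.volume_Icc]
    exact ENNReal.mul_lt_top (ENNReal.inv_lt_top.mpr (by simp [ENNReal.ofReal_pos]; linarith))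
      ENNReal.ofReal_lt_top
  haveI : SFinite ((ENNReal.ofReal (d - c))⁻¹ • (volume.restrict (Icc c d))) := by
    infer_instance
  rw [smul_prod_meas', prod_smul_meas', Measure.prod_restrict, smul_smul]

lemma cont_le (h : ℝ × ℝ → ℝ) (hcont : Continuous h)
    (hrect : ∀ a b c d : ℝ, 0 ≤ a → a < b → b ≤ 1 → 0 ≤ c → c < d → d ≤ 1 →
      ∫ z in Icc a b ×ˢ Icc c d, h z ∂((volume : Measure ℝ).prod volume) = 0) :
    ∀ z ∈ SQ, h z ≤ 0 := by
  by_contra hcon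
  push_neg at hcon
  obtain ⟨z₀, hz₀, hpos⟩ := hcon
  have hz1 : z₀.1 ∈ II := hz₀.1
  have hz2 : z₀.2 ∈ II := hz₀.2
  have hcontAt : ContinuousAt h z₀ := hcont.continuousAt
  rw [Metric.continuousAt_iff] at hcontAt
  obtain ⟨δ, hδpos, hδ⟩ := hcontAt (h z₀ / 2) (by linarith)
  set δ' : ℝ := δ / 2 with hδ'
  have hδ'pos : 0 < δ' := by positivity
  set a : ℝ := max 0 (z₀.1 - δ') with ha
  set b : ℝ := min 1 (z₀.1 + δ') with hb
  set c : ℝ := max 0 (z₀.2 - δ') with hc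
  set d : ℝ := min 1 (z₀.2 + δ') with hd
  have hab : a < b := lt_min (max_lt one_pos (by linarith [hz1.2])) (max_lt (by linarith [hz1.1]) (by linarith))
  have hcd : c < d := lt_min (max_lt one_pos (by linarith [hz2.2])) (max_lt (by linarith [hz2.1]) (by linarith))
  have h0a : 0 ≤ a := le_max_left _ _
  have hb1 : b ≤ 1 := min_le_left _ _
  have h0c : 0 ≤ c := le_max_left _ _
  have hd1 : d ≤ 1 := min_le_left _ _
  have hint := hrect a b c d h0a hab hb1 h0c hcd hd1
  have hbd : ∀ z ∈ Icc a b ×ˢ Icc c d, h z₀ / 2 ≤ h z := by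
    intro z hz
    have h1 : |z.1 - z₀.1| ≤ δ' := by
      have := hz.1
      rw [abs_le]
      constructor
      · have : a ≤ z.1 := this.1
        have h2 : z₀.1 - δ' ≤ a := le_max_right _ _
        linarith
      · have : z.1 ≤ b := hz.1.2
        have h2 : b ≤ z₀.1 + δ' := min_le_right _ _
        linarith
    have h2 : |z.2 - z₀.2| ≤ δ' := by
      rw [abs_le]
      constructor
      · have h3 : c ≤ z.2 := hz.2.1
        have h4 : z₀.2 - δ' ≤ c := le_max_right _ _
        linarith
      · have h3 : z.2 ≤ d := hz.2.2
        have h4 : d ≤ z₀.2 + δ' := min_le_right _ _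
        linarith
    have hdist : dist z z₀ < δ := by
      rw [Prod.dist_eq]
      apply max_lt
      · rw [Real.dist_eq]; linarith
      · rw [Real.dist_eq]; linarith
    have := hδ hdist
    rw [Real.dist_eq, abs_lt] at this
    linarith [this.1]
  have hcompact : IsCompact (Icc a b ×ˢ Icc c d) := (isCompact_Icc).prod isCompact_Icc
  have hintg : IntegrableOn h (Icc a b ×ˢ Icc c d) ((volume : Measure ℝ).prod volume) :=
    hcont.continuousOn.integrableOn_compact hcompact
  have hmeas : MeasurableSet (Icc a b ×ˢ Icc c d) := measurableSet_Icc.prod measurableSet_Icc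
  have hvol : ((volume : Measure ℝ).prod volume) (Icc a b ×ˢ Icc c d) =
      ENNReal.ofReal (b - a) * ENNReal.ofReal (d - c) := by
    rw [Measure.prod_prod, Real.volume_Icc, Real.volume_Icc]
  have hvolr : (((volume : Measure ℝ).prod volume) (Icc a b ×ˢ Icc c d)).toReal =
      (b - a) * (d - c) := by
    rw [hvol, ENNReal.toReal_mul, ENNReal.toReal_ofReal (by linarith), ENNReal.toReal_ofReal (by linarith)]
  have hμfin : ((volume : Measure ℝ).prod volume) (Icc a b ×ˢ Icc c d) ≠ ⊤ := by
    rw [hvol]; exact ENNReal.mul_ne_top ENNReal.ofReal_ne_top ENNReal.ofReal_ne_top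
  have hlow : h z₀ / 2 * ((b - a) * (d - c)) ≤
      ∫ z in Icc a b ×ˢ Icc c d, h z ∂((volume : Measure ℝ).prod volume) := by
    have := setIntegral_mono_on (f := fun _ => h z₀ / 2) (g := h)
      (integrableOn_const hμfin) hintg hmeas hbd
    rwa [setIntegral_const, measureReal_def, hvolr, smul_eq_mul, mul_comm] at this
  rw [hint] at hlow
  have hprod : 0 < (b - a) * (d - c) := mul_pos (by linarith) (by linarith)
  nlinarith [mul_pos (by linarith : (0:ℝ) < h z₀ / 2) hprod]

lemma cont_zero (h : ℝ × ℝ → ℝ) (hcont : Continuous h)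
    (hrect : ∀ a b c d : ℝ, 0 ≤ a → a < b → b ≤ 1 → 0 ≤ c → c < d → d ≤ 1 →
      ∫ z in Icc a b ×ˢ Icc c d, h z ∂((volume : Measure ℝ).prod volume) = 0) :
    ∀ z ∈ SQ, h z = 0 := by
  intro z hz
  have h1 := cont_le h hcont hrect z hz
  have h2 := cont_le (fun z => -h z) (hcont.neg) (fun a b c d h0a hab hb1 h0c hcd hd1 => by
    rw [integral_neg, hrect a b c d h0a hab hb1 h0c hcd hd1, neg_zero]) z hz
  simp only [neg_nonpos] at h2
  linarith [h2]

end

end Stmt5Aux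
open Stmt5Aux Set

theorem stmt_5 (ξ₁ ξ₂ : ℝ × ℝ → ℝ)
    (hc₁ : ContinuousOn ξ₁ (Set.Icc (0:ℝ) 1 ×ˢ Set.Icc (0:ℝ) 1))
    (hc₂ : ContinuousOn ξ₂ (Set.Icc (0:ℝ) 1 ×ˢ Set.Icc (0:ℝ) 1))
    (hadv : ∀ (p₁ p₂ q₁ q₂ : Measure ℝ),
      IsProbabilityMeasure p₁ → IsProbabilityMeasure p₂ →
      IsProbabilityMeasure q₁ → IsProbabilityMeasure q₂ →
      p₁ ≪ volume.restrict (Set.Icc (0:ℝ) 1) → p₂ ≪ volume.restrict (Set.Icc (0:ℝ) 1) →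
      q₁ ≪ volume.restrict (Set.Icc (0:ℝ) 1) → q₂ ≪ volume.restrict (Set.Icc (0:ℝ) 1) →
      ((∫ z, ξ₁ z ∂(p₁.prod p₂)) ≥ (∫ z, ξ₁ z ∂(q₁.prod q₂)) ↔
       (∫ z, ξ₂ z ∂(p₁.prod p₂)) ≤ (∫ z, ξ₂ z ∂(q₁.prod q₂)))) :
    ∃ α : ℝ, 0 < α ∧ ∃ β : ℝ,
      ∀ x ∈ Set.Icc (0:ℝ) 1, ∀ y ∈ Set.Icc (0:ℝ) 1, ξ₂ (x, y) = -α * ξ₁ (x, y) + β := by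
  classical
  haveI : CompactSpace ↥SQ := isCompact_iff_compactSpace.mp (isCompact_Icc.prod isCompact_Icc)
  have hclosed : IsClosed SQ := isClosed_Icc.prod isClosed_Icc
  obtain ⟨Ξ₁, -, hΞ₁⟩ := BoundedContinuousFunction.exists_norm_eq_restrict_eq_of_closed
    (BoundedContinuousFunction.mkOfCompact ⟨SQ.restrict ξ₁, hc₁.restrict⟩) hclosed
  obtain ⟨Ξ₂, -, hΞ₂⟩ := BoundedContinuousFunction.exists_norm_eq_restrict_eq_of_closed
    (BoundedContinuousFunction.mkOfCompact ⟨SQ.restrict ξ₂, hc₂.restrict⟩) hclosed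
  have hE₁ : ∀ z ∈ SQ, Ξ₁ z = ξ₁ z := by
    intro z hz
    have := DFunLike.congr_fun hΞ₁ (⟨z, hz⟩ : ↥SQ)
    exact this
  have hE₂ : ∀ z ∈ SQ, Ξ₂ z = ξ₂ z := by
    intro z hz
    have := DFunLike.congr_fun hΞ₂ (⟨z, hz⟩ : ↥SQ)
    exact this
  -- restate the adversarial hypothesis via the extensions
  have hadv' : ∀ (P₁ P₂ Q₁ Q₂ : Measure ℝ),
      IsProbabilityMeasure P₁ → IsProbabilityMeasure P₂ →
      IsProbabilityMeasure Q₁ → IsProbabilityMeasure Q₂ →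
      P₁ ≪ volume.restrict II → P₂ ≪ volume.restrict II →
      Q₁ ≪ volume.restrict II → Q₂ ≪ volume.restrict II →
      (J Ξ₁ P₁ P₂ ≥ J Ξ₁ Q₁ Q₂ ↔ J Ξ₂ P₁ P₂ ≤ J Ξ₂ Q₁ Q₂) := by
    intro P₁ P₂ Q₁ Q₂ h1 h2 h3 h4 a1 a2 a3 a4
    rw [← integral_eq_J ξ₁ Ξ₁ hE₁ a1 a2, ← integral_eq_J ξ₁ Ξ₁ hE₁ a3 a4,
        ← integral_eq_J ξ₂ Ξ₂ hE₂ a1 a2, ← integral_eq_J ξ₂ Ξ₂ hE₂ a3 a4]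
    exact hadv P₁ P₂ Q₁ Q₂ h1 h2 h3 h4 a1 a2 a3 a4
  -- the set of achievable expected payoff pairs
  set S : Set (ℝ × ℝ) := {w | ∃ p q : Measure ℝ,
    IsProbabilityMeasure p ∧ IsProbabilityMeasure q ∧
    p ≪ volume.restrict II ∧ q ≪ volume.restrict II ∧
    w = (J Ξ₁ p q, J Ξ₂ p q)} with hSdef
  have hrelS : ∀ u ∈ S, ∀ v ∈ S, (u.1 ≥ v.1 ↔ u.2 ≤ v.2) := by
    rintro u ⟨p, q, hp, hq, ap, aq, rfl⟩ v ⟨p', q', hp', hq', ap', aq', rfl⟩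
    exact hadv' p q p' q' hp hq hp' hq' ap aq ap' aq'
  have hsegS : ∀ u ∈ S, ∀ v ∈ S, ∀ x ∈ Set.uIcc u.1 v.1,
      ∃ w ∈ S, w.1 = x ∧ (w.2 - u.2) * (v.1 - u.1) = (v.2 - u.2) * (w.1 - u.1) := by
    rintro u ⟨P₁, P₂, hP₁, hP₂, aP₁, aP₂, rfl⟩ v ⟨Q₁, Q₂, hQ₁, hQ₂, aQ₁, aQ₂, rfl⟩ x hx
    haveI := hP₁; haveI := hP₂; haveI := hQ₁; haveI := hQ₂
    simp only [Prod.fst, Prod.snd] at hx ⊢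
    set a00 := J Ξ₁ P₁ P₂ with ha00
    set a10 := J Ξ₁ Q₁ P₂ with ha10
    set a01 := J Ξ₁ P₁ Q₂ with ha01
    set a11 := J Ξ₁ Q₁ Q₂ with ha11
    set b00 := J Ξ₂ P₁ P₂ with hb00
    set b10 := J Ξ₂ Q₁ P₂ with hb10
    set b01 := J Ξ₂ P₁ Q₂ with hb01
    set b11 := J Ξ₂ Q₁ Q₂ with hb11
    have Hl1 : ∀ t s t' s' : ℝ, t ∈ Icc (0:ℝ) 1 → s ∈ Icc (0:ℝ) 1 → t' ∈ Icc (0:ℝ) 1 →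
        s' ∈ Icc (0:ℝ) 1 →
        (a00 + (a10 - a00)*t + (a01 - a00)*s + (a11 - a10 - a01 + a00)*(t*s) ≥
           a00 + (a10 - a00)*t' + (a01 - a00)*s' + (a11 - a10 - a01 + a00)*(t'*s') ↔
         b00 + (b10 - b00)*t + (b01 - b00)*s + (b11 - b10 - b01 + b00)*(t*s) ≤
           b00 + (b10 - b00)*t' + (b01 - b00)*s' + (b11 - b10 - b01 + b00)*(t'*s')) := by
      intro t s t' s' ht hs ht' hs'
      haveI := mix_prob ht P₁ Q₁
      haveI := mix_prob hs P₂ Q₂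
      haveI := mix_prob ht' P₁ Q₁
      haveI := mix_prob hs' P₂ Q₂
      have h := hadv' (mix t P₁ Q₁) (mix s P₂ Q₂) (mix t' P₁ Q₁) (mix s' P₂ Q₂)
        (mix_prob ht _ _) (mix_prob hs _ _) (mix_prob ht' _ _) (mix_prob hs' _ _)
        (mix_ac aP₁ aQ₁) (mix_ac aP₂ aQ₂) (mix_ac aP₁ aQ₁) (mix_ac aP₂ aQ₂)
      rw [J_mix_mix Ξ₁ ht hs, J_mix_mix Ξ₁ ht' hs',
          J_mix_mix Ξ₂ ht hs, J_mix_mix Ξ₂ ht' hs'] at h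
      exact h
    obtain ⟨α, hαpos, hB, hC, hD⟩ := l1 Hl1
    set φ : ℝ → ℝ := fun t => a00 + (a10 - a00)*t + (a01 - a00)*t +
      (a11 - a10 - a01 + a00)*(t*t) with hφ
    have hφcont : Continuous φ := by fun_prop
    have hφ0 : φ 0 = a00 := by simp [hφ]
    have hφ1 : φ 1 = a11 := by simp [hφ]; ring
    have hx' : x ∈ Set.uIcc (φ 0) (φ 1) := by rw [hφ0, hφ1]; exact hx
    obtain ⟨t, ht01, hφt⟩ := intermediate_value_uIcc hφcont.continuousOn hx'
    rw [Set.uIcc_of_le zero_le_one] at ht01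
    haveI := mix_prob ht01 P₁ Q₁
    haveI := mix_prob ht01 P₂ Q₂
    have hw1 : J Ξ₁ (mix t P₁ Q₁) (mix t P₂ Q₂) = φ t := by
      rw [J_mix_mix Ξ₁ ht01 ht01, hφ]
    have hw2 : J Ξ₂ (mix t P₁ Q₁) (mix t P₂ Q₂) =
        b00 + (b10 - b00)*t + (b01 - b00)*t + (b11 - b10 - b01 + b00)*(t*t) :=
      J_mix_mix Ξ₂ ht01 ht01
    refine ⟨(J Ξ₁ (mix t P₁ Q₁) (mix t P₂ Q₂), J Ξ₂ (mix t P₁ Q₁) (mix t P₂ Q₂)), ?_, ?_, ?_⟩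
    · exact ⟨mix t P₁ Q₁, mix t P₂ Q₂, inferInstance, inferInstance,
        mix_ac aP₁ aQ₁, mix_ac aP₂ aQ₂, rfl⟩
    · simpa [hw1] using hφt
    · simp only
      have hv : b11 - b00 = -α * (a11 - a00) := by linear_combination hB + hC + hD
      have hw2' : J Ξ₂ (mix t P₁ Q₁) (mix t P₂ Q₂) - b00 =
          -α * (J Ξ₁ (mix t P₁ Q₁) (mix t P₂ Q₂) - a00) := by
        rw [hw1, hw2, hφ]
        simp only
        linear_combination t * hB + t * hC + (t*t) * hD
      linear_combination (a11 - a00) * hw2' -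
        (J Ξ₁ (mix t P₁ Q₁) (mix t P₂ Q₂) - a00) * hv
  have hSne : S.Nonempty := by
    haveI := unif_prob (show (0:ℝ) < 1 by norm_num)
    exact ⟨(J Ξ₁ (unif 0 1) (unif 0 1), J Ξ₂ (unif 0 1) (unif 0 1)),
      unif 0 1, unif 0 1, inferInstance, inferInstance,
      unif_ac le_rfl le_rfl, unif_ac le_rfl le_rfl, rfl⟩
  obtain ⟨α, hαpos, β, hline⟩ := l2 S hSne hrelS hsegS
  -- rectangle integrals vanish
  have hrect : ∀ a b c d : ℝ, 0 ≤ a → a < b → b ≤ 1 → 0 ≤ c → c < d → d ≤ 1 →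
      ∫ z in Icc a b ×ˢ Icc c d, (fun z => Ξ₂ z + α * Ξ₁ z - β) z
        ∂((volume : Measure ℝ).prod volume) = 0 := by
    intro a b c d h0a hab hb1 h0c hcd hd1
    haveI := unif_prob hab
    haveI := unif_prob hcd
    have hmem : (J Ξ₁ (unif a b) (unif c d), J Ξ₂ (unif a b) (unif c d)) ∈ S :=
      ⟨unif a b, unif c d, inferInstance, inferInstance,
        unif_ac h0a hb1, unif_ac h0c hd1, rfl⟩
    have hlin := hline _ hmem
    simp only at hlin
    haveI : IsProbabilityMeasure ((unif a b).prod (unif c d)) := by infer_instance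
    have hI : ∫ z, (Ξ₂ z + α * Ξ₁ z - β) ∂((unif a b).prod (unif c d)) = 0 := by
      set μ := (unif a b).prod (unif c d) with hμdef
      have i2 : Integrable (fun z : ℝ × ℝ => Ξ₂ z) μ := Ξ₂.integrable _
      have i1 : Integrable (fun z : ℝ × ℝ => α * Ξ₁ z) μ :=
        (Ξ₁.integrable _).const_mul α
      have isum : Integrable (fun z : ℝ × ℝ => Ξ₂ z + α * Ξ₁ z) μ := i2.add i1
      have step : ∫ z, (Ξ₂ z + α * Ξ₁ z - β) ∂μ =
          (∫ z, (Ξ₂ z + α * Ξ₁ z) ∂μ) - ∫ _, β ∂μ := integral_sub isum (integrable_const β)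
      have step2 : ∫ z, (Ξ₂ z + α * Ξ₁ z) ∂μ =
          (∫ z, Ξ₂ z ∂μ) + ∫ z, α * Ξ₁ z ∂μ := integral_add i2 i1
      have step3 : ∫ z, α * Ξ₁ z ∂μ = α * ∫ z, Ξ₁ z ∂μ := integral_const_mul α _
      have step4 : ∫ _, β ∂μ = β := by
        rw [integral_const]
        simp [measure_univ]
      rw [step, step2, step3, step4]
      have e2 : ∫ z, Ξ₂ z ∂μ = J Ξ₂ (unif a b) (unif c d) := rfl
      have e1 : ∫ z, Ξ₁ z ∂μ = J Ξ₁ (unif a b) (unif c d) := rfl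
      rw [e1, e2]
      linarith [hlin]
    rw [unif_prod_eq hab hcd, integral_smul_measure] at hI
    have hc0 : (((ENNReal.ofReal (b - a))⁻¹ * (ENNReal.ofReal (d - c))⁻¹)).toReal ≠ 0 := by
      rw [ENNReal.toReal_mul, ENNReal.toReal_inv, ENNReal.toReal_inv,
        ENNReal.toReal_ofReal (by linarith), ENNReal.toReal_ofReal (by linarith)]
      have h1 : (0:ℝ) < (b - a)⁻¹ := inv_pos.mpr (by linarith)
      have h2 : (0:ℝ) < (d - c)⁻¹ := inv_pos.mpr (by linarith)
      exact ne_of_gt (mul_pos h1 h2)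
    rcases smul_eq_zero.mp hI with h | h
    · exact absurd h hc0
    · exact h
  have hconth : Continuous (fun z : ℝ × ℝ => Ξ₂ z + α * Ξ₁ z - β) :=
    (Ξ₂.continuous.add (continuous_const.mul Ξ₁.continuous)).sub continuous_const
  have hzero := cont_zero _ hconth hrect
  refine ⟨α, hαpos, β, ?_⟩
  intro x hx y hy
  have hz : ((x : ℝ), y) ∈ SQ := ⟨hx, hy⟩
  have h0 := hzero (x, y) hz
  have e1 := hE₁ (x, y) hz
  have e2 := hE₂ (x, y) hz
  rw [e1, e2] at h0
  linarith
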